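/- Soundness of the parallel congruence rule (PCSub): if R_f(P) = R_f(Q), then R_f(P | R) = R_f(Q | R); consequently, if ⟨P⟩p ↔ ⟨Q⟩p is valid then ⟨P|R⟩p ↔ ⟨Q|R⟩p is valid. -/

import Mathlib

/-- Running actions of XCCS over names `N`: input, output and the silent action. -/
inductive RAct (N : Type)
  | inp : N → RAct N
  | out : N → RAct N
  | tau : RAct N

/-- Complementary running actions. -/
def RAct.co {N : Type} : RAct N → RAct N → Prop := fun a b =>
  (∃ n, a = .inp n ∧ b = .out n) ∨ (∃ n, a = .out n ∧ b = .inp n)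

/-- XCCS actions: running actions together with the ending action `END`. -/
inductive XAct (N : Type)
  | run : RAct N → XAct N
  | END : XAct N

/-- XCCS process terms: the null process `0`, `END`, action prefix, sequential
composition, nondeterministic choice, parallel composition, iteration and
restriction. -/
inductive XP (N : Type)
  | zero : XP N
  | endp : XP N
  | pre : RAct N → XP N → XP N
  | seq : XP N → XP N → XP N
  | choice : XP N → XP N → XP N
  | par : XP N → XP N → XP N
  | star : XP N → XP N
  | res : Set N → XP N → XP N

/-- A running action is allowed through the restriction `\L` if it is `τ` or an
input/output on a channel not in `L`. -/
def allowed {N : Type} (L : Set N) : RAct N → Prop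
  | .inp a => a ∉ L
  | .out a => a ∉ L
  | .tau => True

mutual
/-- `XTm P` means `P →END ✓`: `P` can successfully finish. -/
inductive XTm {N : Type} : XP N → Prop
  | endp : XTm .endp
  | star {P : XP N} : XTm (.star P)
  | seq {P Q : XP N} : XTm P → XTm Q → XTm (.seq P Q)
  | choiceL {P Q : XP N} : XTm P → XTm (.choice P Q)
  | choiceR {P Q : XP N} : XTm Q → XTm (.choice P Q)
  | par {P Q : XP N} : XTm P → XTm Q → XTm (.par P Q)
  | res {L : Set N} {P : XP N} : XTm P → XTm (.res L P)

/-- Transitions `P →α P'` of XCCS for running actions `α`. -/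
inductive XTr {N : Type} : XP N → RAct N → XP N → Prop
  | pre {α : RAct N} {P : XP N} : XTr (.pre α P) α P
  | seqL {P P' Q : XP N} {α} : XTr P α P' → XTr (.seq P Q) α (.seq P' Q)
  | seqEnd {P Q Q' : XP N} {α} : XTm P → XTr Q α Q' → XTr (.seq P Q) α Q'
  | choiceL {P Q P' : XP N} {α} : XTr P α P' → XTr (.choice P Q) α P'
  | choiceR {P Q Q' : XP N} {α} : XTr Q α Q' → XTr (.choice P Q) α Q'
  | parL {P Q P' : XP N} {α} : XTr P α P' → XTr (.par P Q) α (.par P' Q)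
  | parR {P Q Q' : XP N} {α} : XTr Q α Q' → XTr (.par P Q) α (.par P Q')
  | sync {P Q P' Q' : XP N} {a b : RAct N} :
      RAct.co a b → XTr P a P' → XTr Q b Q' → XTr (.par P Q) (.tau) (.par P' Q')
  | star {P P' : XP N} {α} : XTr P α P' → XTr (.star P) α (.seq P' (.star P))
  | res {L : Set N} {P P' : XP N} {α} :
      XTr P α P' → allowed L α → XTr (.res L P) α (.res L P')
end

/-- `XRun P l` means `P ⇒l ✓`: `P` performs the sequence `l` (which necessarily
ends with `END`) and successfully finishes. -/
inductive XRun {N : Type} : XP N → List (XAct N) → Prop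
  | done {P : XP N} : XTm P → XRun P [.END]
  | cons {P P' : XP N} {α : RAct N} {l : List (XAct N)} :
      XTr P α P' → XRun P' l → XRun P (.run α :: l)

/-- The set of finite possible runs of an XCCS process. -/
def XRf {N : Type} (P : XP N) : Set (List (XAct N)) :=
  { l | XRun P l }

/-- `♮`: remove a trailing `END` from a sequence, if present. -/
def natl {N : Type} : List (XAct N) → List (XAct N)
  | [] => []
  | [XAct.END] => []
  | [a] => [a]
  | a :: l => a :: natl l

/-- `END`-absorbing concatenation of sets of sequences. -/
def xconc {N : Type} (R S : Set (List (XAct N))) : Set (List (XAct N)) :=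
  { l | ∃ a ∈ R, ∃ b ∈ S, l = natl a ++ b }

/-- Powers with respect to `♮`-concatenation; `R⁰ = {END}`, the identity for `∘`. -/
def xpow {N : Type} (R : Set (List (XAct N))) : ℕ → Set (List (XAct N))
  | 0 => {[XAct.END]}
  | n + 1 => xconc R (xpow R n)

/-- Kleene star with respect to `♮`-concatenation. -/
def xstar {N : Type} (R : Set (List (XAct N))) : Set (List (XAct N)) :=
  ⋃ n : ℕ, xpow R n

/-- Paths in a frame matched by a nonempty sequence of actions. -/
inductive Matches {W A : Type} (R : A → W → W → Prop) : W → List A → W → Prop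
  | single {w v : W} {α : A} : R α w v → Matches R w [α] v
  | cons {w u v : W} {α : A} {l : List A} :
      R α w u → Matches R u l v → Matches R w (α :: l) v

/-- Satisfaction of `⟨P⟩p` at `w` via the finite runs `Rset` of `P`. -/
def DiaSat {W A : Type} (R : A → W → W → Prop) (Rset : Set (List A))
    (V : Set W) (w : W) : Prop :=
  ∃ (l : List A) (v : W), l ∈ Rset ∧ Matches R w l v ∧ v ∈ V

/-- Validity of `⟨P⟩p ↔ ⟨Q⟩p` in all XCCS-PDL models: all frames interpret `END`
as the identity relation. -/
def XValidIff {N : Type} (P Q : XP N) : Prop :=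
  ∀ (W : Type) (_ : Nonempty W) (R : XAct N → W → W → Prop),
    (∀ w v : W, R XAct.END w v ↔ w = v) →
    ∀ (V : Set W) (w : W),
      DiaSat R (XRf P) V w ↔ DiaSat R (XRf Q) V w

/-- Interleaving with synchronization of two runs. -/
inductive XMerge {N : Type} : List (XAct N) → List (XAct N) → List (XAct N) → Prop
  | done : XMerge [.END] [.END] [.END]
  | left {α lp lr l} : XMerge lp lr l → XMerge (.run α :: lp) lr (.run α :: l)
  | right {α lp lr l} : XMerge lp lr l → XMerge lp (.run α :: lr) (.run α :: l)
  | sync {a b lp lr l} : RAct.co a b → XMerge lp lr l →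
      XMerge (.run a :: lp) (.run b :: lr) (.run .tau :: l)

lemma run_par_fwd {N : Type} {S : XP N} {l} (h : XRun S l) :
    ∀ P R, S = .par P R → ∃ lp lr, XRun P lp ∧ XRun R lr ∧ XMerge lp lr l := by
  induction h with
  | done htm =>
    rintro P R rfl
    cases htm with
    | par hP hR => exact ⟨_, _, .done hP, .done hR, .done⟩
  | cons htr hrun ih =>
    rintro P R rfl
    cases htr with
    | parL h1 =>
      obtain ⟨lp, lr, hp, hr, hm⟩ := ih _ _ rfl
      exact ⟨_, _, .cons h1 hp, hr, .left hm⟩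
    | parR h1 =>
      obtain ⟨lp, lr, hp, hr, hm⟩ := ih _ _ rfl
      exact ⟨_, _, hp, .cons h1 hr, .right hm⟩
    | sync hco h1 h2 =>
      obtain ⟨lp, lr, hp, hr, hm⟩ := ih _ _ rfl
      exact ⟨_, _, .cons h1 hp, .cons h2 hr, .sync hco hm⟩

lemma run_par_bwd {N : Type} {lp lr l : List (XAct N)} (hm : XMerge lp lr l) :
    ∀ P R : XP N, XRun P lp → XRun R lr → XRun (XP.par P R) l := by
  induction hm with
  | done =>
    intro P R hp hr
    cases hp with
    | done hP =>
      cases hr with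
      | done hR => exact .done (.par hP hR)
  | left hm ih =>
    intro P R hp hr
    cases hp with
    | cons h1 hp' => exact .cons (.parL h1) (ih _ _ hp' hr)
  | right hm ih =>
    intro P R hp hr
    cases hr with
    | cons h1 hr' => exact .cons (.parR h1) (ih _ _ hp hr')
  | sync hco hm ih =>
    intro P R hp hr
    cases hp with
    | cons h1 hp' =>
      cases hr with
      | cons h2 hr' => exact .cons (.sync hco h1 h2) (ih _ _ hp' hr')

lemma xrf_par {N : Type} (P R : XP N) :
    XRf (XP.par P R) = {l | ∃ lp ∈ XRf P, ∃ lr ∈ XRf R, XMerge lp lr l} := by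
  ext l
  constructor
  · intro h
    obtain ⟨lp, lr, hp, hr, hm⟩ := run_par_fwd h P R rfl
    exact ⟨lp, hp, lr, hr, hm⟩
  · rintro ⟨lp, hp, lr, hr, hm⟩
    exact run_par_bwd hm _ _ hp hr

lemma run_shape {N : Type} {P : XP N} {l} (h : XRun P l) :
    ∃ αs : List (RAct N), l = αs.map XAct.run ++ [XAct.END] := by
  induction h with
  | done _ => exact ⟨[], rfl⟩
  | cons _ _ ih =>
    obtain ⟨αs, rfl⟩ := ih
    exact ⟨_ :: αs, rfl⟩

/-- Canonical model relation on histories. -/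
def Rc {N : Type} : XAct N → List (XAct N) → List (XAct N) → Prop
  | .run α, w, v => v = w ++ [XAct.run α]
  | .END, w, v => v = w

lemma matches_can {N : Type} (αs : List (RAct N)) :
    ∀ w, Matches Rc w (αs.map XAct.run ++ [XAct.END]) (w ++ αs.map XAct.run) := by
  induction αs with
  | nil => intro w; simpa using Matches.single (show Rc XAct.END w w from rfl)
  | cons α αs ih =>
    intro w
    have h1 : Rc (XAct.run α) w (w ++ [XAct.run α]) := rfl
    have := Matches.cons h1 (ih (w ++ [XAct.run α]))
    simpa [List.append_assoc] using this

def isRunAct {N : Type} : XAct N -> Bool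
  | .run _ => true
  | .END => false

lemma matches_rc_eq {N : Type} :
    ∀ (l w v : List (XAct N)), Matches Rc w l v -> v = w ++ l.filter isRunAct := by
  intro l
  induction l with
  | nil => intro w v h; cases h
  | cons a l ih =>
    intro w v h
    cases h with
    | single h1 =>
      cases a with
      | run b =>
        have h1' : v = w ++ [XAct.run b] := h1
        simpa [isRunAct, List.filter_cons] using h1'
      | END =>
        have h1' : v = w := h1
        simpa [isRunAct] using h1'
    | cons h1 h2 =>
      cases a with
      | run b =>
        have hu := (h1 : _ = w ++ [XAct.run b])
        subst hu
        simpa [isRunAct, List.append_assoc, List.filter_cons] using ih _ _ h2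
      | END =>
        have hu := (h1 : _ = w)
        subst hu
        simpa [isRunAct] using ih _ _ h2

lemma filter_run {N : Type} (bs : List (RAct N)) :
    (bs.map XAct.run).filter isRunAct = bs.map XAct.run := by
  induction bs with
  | nil => rfl
  | cons b bs ih => simp [isRunAct, ih]

lemma valid_sub {N : Type} {P Q : XP N}
    (h : ∀ (V : Set (List (XAct N))) w, DiaSat Rc (XRf P) V w ↔ DiaSat Rc (XRf Q) V w) :
    XRf P ⊆ XRf Q := by
  intro l hl
  obtain ⟨αs, rfl⟩ := run_shape hl
  have hd : DiaSat Rc (XRf P) {αs.map XAct.run} [] :=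
    ⟨_, _, hl, by simpa using matches_can αs [], rfl⟩
  obtain ⟨l', v, hl', hm, hv⟩ := (h _ _).1 hd
  obtain ⟨βs, rfl⟩ := run_shape hl'
  have h1 : v = βs.map XAct.run := by
    simpa [List.filter_append, filter_run, isRunAct] using matches_rc_eq _ _ _ hm
  have h2 : v = αs.map XAct.run := hv
  have : βs.map XAct.run = αs.map XAct.run := h1 ▸ h2
  have hβα : βs = αs := by
    have hinj : Function.Injective (XAct.run : RAct N → XAct N) := by
      intro a b hab; injection hab
    exact List.map_injective_iff.mpr hinj this
  rwa [hβα] at hl'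

lemma rc_end {N : Type} : ∀ w v : List (XAct N), Rc XAct.END w v ↔ w = v := by
  intro w v; exact ⟨fun h => h.symm, fun h => h.symm⟩

/-- Soundness of the parallel congruence rule (PCSub): if `R_f(P) = R_f(Q)` then
`R_f(P|R) = R_f(Q|R)`; consequently, if `⟨P⟩p ↔ ⟨Q⟩p` is valid then
`⟨P|R⟩p ↔ ⟨Q|R⟩p` is valid. -/
theorem pcsub_sound {N : Type} (P Q R : XP N) :
    (XRf P = XRf Q → XRf (XP.par P R) = XRf (XP.par Q R)) ∧
    (XValidIff P Q → XValidIff (XP.par P R) (XP.par Q R)) := by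
  have main : XRf P = XRf Q → XRf (XP.par P R) = XRf (XP.par Q R) := by
    intro h
    rw [xrf_par, xrf_par, h]
  refine ⟨main, fun hv => ?_⟩
  have heq : XRf P = XRf Q :=
    subset_antisymm
      (valid_sub fun V w => hv _ ⟨[]⟩ Rc rc_end V w)
      (valid_sub fun V w => (hv _ ⟨[]⟩ Rc rc_end V w).symm)
  intro W _ Rel hR V w
  rw [main heq]
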